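/- Under the hypotheses of the LFR factorization Â = L·(Q + TZᴴ)·R with Â = [[A,*],[0,0]] and A upper Hessenberg of size n: if R is proper (all outermost entries r_{i+k,i} ≠ 0 for i = 1,...,n), then A is nonsingular. -/
import Mathlib


open scoped Matrix

private lemma sum_first_aux {N k : ℕ} (hk : k ≤ N) (f : Fin N → ℂ)
    (h0 : ∀ i : Fin N, k ≤ (i : ℕ) → f i = 0) :
    ∑ i, f i = ∑ i : Fin k, f (Fin.castLE hk i) := by
  classical
  set g : ℕ → ℂ := fun m => if h : m < N then f ⟨m, h⟩ else 0 with hg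
  have h1 : ∑ i : Fin N, f i = ∑ m ∈ Finset.range N, g m := by
    rw [← Fin.sum_univ_eq_sum_range g N]
    refine Finset.sum_congr rfl fun i _ => ?_
    simp [hg, i.isLt]
  have h2 : ∑ m ∈ Finset.range N, g m = ∑ m ∈ Finset.range k, g m := by
    refine (Finset.sum_subset (Finset.range_subset_range.mpr hk) ?_).symm
    intro m hm hmk
    simp only [Finset.mem_range] at hm hmk
    simp only [hg, dif_pos hm]
    exact h0 ⟨m, hm⟩ (Nat.le_of_not_lt hmk)
  have h3 : ∑ m ∈ Finset.range k, g m = ∑ i : Fin k, f (Fin.castLE hk i) := by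
    rw [← Fin.sum_univ_eq_sum_range g k]
    refine Finset.sum_congr rfl fun i _ => ?_
    have hi : (i : ℕ) < N := lt_of_lt_of_le i.isLt hk
    simp only [hg, dif_pos hi]
    rfl
  rw [h1, h2, h3]

theorem stmt_12 {n k : ℕ}
    (L R Q : Matrix (Fin (n + k)) (Fin (n + k)) ℂ)
    (hL : L ∈ Matrix.unitaryGroup (Fin (n + k)) ℂ)
    (hLhess : ∀ i j : Fin (n + k), (i : ℕ) + k < (j : ℕ) → L i j = 0)
    (hLprop : ∀ i j : Fin (n + k), (j : ℕ) = (i : ℕ) + k → L i j ≠ 0)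
    (hR : R ∈ Matrix.unitaryGroup (Fin (n + k)) ℂ)
    (hRhess : ∀ i j : Fin (n + k), (j : ℕ) + k < (i : ℕ) → R i j = 0)
    (hQ : Q ∈ Matrix.unitaryGroup (Fin (n + k)) ℂ)
    (hQhess : ∀ i j : Fin (n + k), (j : ℕ) + 1 < (i : ℕ) → Q i j = 0)
    (hQblock : ∀ i j : Fin (n + k), ((i : ℕ) < k ∨ (j : ℕ) < k) → Q i j = if i = j then 1 else 0)
    (Tk : Matrix (Fin k) (Fin k) ℂ)
    (hTkTri : ∀ i j : Fin k, (j : ℕ) < (i : ℕ) → Tk i j = 0)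
    (hTkUnit : IsUnit Tk.det)
    (T : Matrix (Fin (n + k)) (Fin k) ℂ)
    (hTtop : ∀ i j : Fin k, T (Fin.castLE (Nat.le_add_left k n) i) j = Tk i j)
    (hTbot : ∀ i : Fin (n + k), k ≤ (i : ℕ) → ∀ j, T i j = 0)
    (hLbot : ∀ i j : Fin k, L ⟨n + (i : ℕ), by have := i.isLt; omega⟩ (Fin.castLE (Nat.le_add_left k n) j) = (-Tk⁻¹) i j)
    (hRprop : ∀ i j : Fin (n + k), (i : ℕ) = (j : ℕ) + k → R i j ≠ 0) :
    ∀ Ahat : Matrix (Fin (n + k)) (Fin (n + k)) ℂ,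
      Ahat = L * (Q + T * ((Matrix.of fun (i : Fin k) (j : Fin (n + k)) => L ⟨n + (i : ℕ), by have := i.isLt; omega⟩ j) * Q)) * R →
      IsUnit (Matrix.det (Matrix.of fun i j : Fin n =>
        Ahat (Fin.castLE (Nat.le_add_right n k) i) (Fin.castLE (Nat.le_add_right n k) j))) := by
  intro Ahat hA
  classical
  set S : Matrix (Fin k) (Fin (n + k)) ℂ :=
    Matrix.of fun (i : Fin k) (j : Fin (n + k)) =>
      L ⟨n + (i : ℕ), by have := i.isLt; omega⟩ j with hSdef
  set P : Matrix (Fin (n + k)) (Fin (n + k)) ℂ := Q + T * (S * Q) with hPdef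
  have hA' : Ahat = L * P * R := hA
  -- S * T = -1
  have hST : S * T = (-1 : Matrix (Fin k) (Fin k) ℂ) := by
    ext i j
    rw [Matrix.mul_apply]
    rw [sum_first_aux (Nat.le_add_left k n) _ (fun c hc => by rw [hTbot c hc]; ring)]
    have : ∀ c : Fin k,
        S i (Fin.castLE (Nat.le_add_left k n) c) * T (Fin.castLE (Nat.le_add_left k n) c) j
          = (-Tk⁻¹) i c * Tk c j := by
      intro c
      rw [hTtop c j]
      have : S i (Fin.castLE (Nat.le_add_left k n) c) = (-Tk⁻¹) i c := hLbot i c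
      rw [this]
    rw [Finset.sum_congr rfl fun c _ => this c]
    have h2 : ((-Tk⁻¹) * Tk) i j = (-1 : Matrix (Fin k) (Fin k) ℂ) i j := by
      rw [Matrix.neg_mul, Matrix.nonsing_inv_mul Tk hTkUnit]
    rw [← Matrix.mul_apply, h2]
  have hSP : S * P = 0 := by
    rw [hPdef, Matrix.mul_add, ← Matrix.mul_assoc, Matrix.mul_assoc S T _, ← Matrix.mul_assoc S T _,
      hST]
    simp
  -- bottom rows of Ahat vanish
  have hbot : ∀ (i : Fin (n + k)), n ≤ (i : ℕ) → ∀ j, Ahat i j = 0 := by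
    intro i hi j
    have hik : (i : ℕ) - n < k := by have := i.isLt; omega
    have hieq : i = (⟨n + ((i : ℕ) - n), by have := i.isLt; omega⟩ : Fin (n + k)) := by
      apply Fin.ext; simp; omega
    set i' : Fin k := ⟨(i : ℕ) - n, hik⟩ with hi'
    have key : Ahat i j = (S * (P * R)) i' j := by
      rw [hA', Matrix.mul_assoc, hieq]
      rw [Matrix.mul_apply, Matrix.mul_apply]
      rfl
    rw [key, ← Matrix.mul_assoc, hSP, Matrix.zero_mul]
    rfl
  -- main argument
  rw [isUnit_iff_ne_zero]
  intro hdet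
  obtain ⟨v, hv, hAv⟩ := Matrix.exists_mulVec_eq_zero_iff.mpr hdet
  set w : Fin (n + k) → ℂ := fun c => if h : (c : ℕ) < n then v ⟨(c : ℕ), h⟩ else 0 with hwdef
  have hw : Ahat *ᵥ w = 0 := by
    funext i
    simp only [Matrix.mulVec, dotProduct, Pi.zero_apply]
    by_cases hi : (i : ℕ) < n
    · rw [sum_first_aux (Nat.le_add_right n k) _
        (fun c hc => by simp [hwdef, Nat.not_lt.mpr hc])]
      have : ∀ c : Fin n, Ahat i (Fin.castLE (Nat.le_add_right n k) c)
          * w (Fin.castLE (Nat.le_add_right n k) c)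
          = Ahat (Fin.castLE (Nat.le_add_right n k) ⟨(i : ℕ), hi⟩)
              (Fin.castLE (Nat.le_add_right n k) c) * v c := by
        intro c
        have h1 : w (Fin.castLE (Nat.le_add_right n k) c) = v c := by
          simp [hwdef, c.isLt]
        have h2 : i = Fin.castLE (Nat.le_add_right n k) ⟨(i : ℕ), hi⟩ := by
          apply Fin.ext; rfl
        rw [h1, ← h2]
      rw [Finset.sum_congr rfl fun c _ => this c]
      have := congrFun hAv ⟨(i : ℕ), hi⟩
      simpa [Matrix.mulVec, dotProduct] using this
    · refine Finset.sum_eq_zero fun c _ => ?_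
      rw [hbot i (by omega) c]; ring
  -- deduce (P * R) *ᵥ w = 0
  have hLunit : star L * L = 1 := hL.1
  have hPRw : (P * R) *ᵥ w = 0 := by
    have h1 : L *ᵥ ((P * R) *ᵥ w) = 0 := by
      rw [Matrix.mulVec_mulVec, ← Matrix.mul_assoc, ← hA', hw]
    have h2 : (star L * L) *ᵥ ((P * R) *ᵥ w) = 0 := by
      rw [← Matrix.mulVec_mulVec, h1, Matrix.mulVec_zero]
    simpa [hLunit] using h2
  set u : Fin (n + k) → ℂ := R *ᵥ w with hudef
  have hPu : P *ᵥ u = 0 := by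
    rw [hudef, Matrix.mulVec_mulVec]; exact hPRw
  set y : Fin (n + k) → ℂ := Q *ᵥ u with hydef
  -- y vanishes on indices ≥ k
  have hy : ∀ i : Fin (n + k), k ≤ (i : ℕ) → y i = 0 := by
    intro i hi
    have h1 : y i + (T *ᵥ (S *ᵥ y)) i = 0 := by
      have := congrFun hPu i
      simpa [hPdef, hydef, Matrix.add_mulVec, Matrix.mulVec_mulVec, Matrix.mul_assoc]
        using this
    have h2 : (T *ᵥ (S *ᵥ y)) i = 0 := by
      simp only [Matrix.mulVec, dotProduct]
      exact Finset.sum_eq_zero fun j _ => by rw [hTbot i hi j]; ring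
    rw [h2, add_zero] at h1
    exact h1
  -- u vanishes on indices ≥ k
  have hQunit : star Q * Q = 1 := hQ.1
  have hu : ∀ i : Fin (n + k), k ≤ (i : ℕ) → u i = 0 := by
    intro i hi
    have h1 : u i = (star Q *ᵥ y) i := by
      rw [hydef, Matrix.mulVec_mulVec, hQunit, Matrix.one_mulVec]
    rw [h1]
    simp only [Matrix.mulVec, dotProduct]
    refine Finset.sum_eq_zero fun j _ => ?_
    by_cases hj : (j : ℕ) < k
    · have hne : j ≠ i := by intro h; rw [h] at hj; omega
      have : Q j i = 0 := by rw [hQblock j i (Or.inl hj), if_neg hne]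
      simp [Matrix.conjTranspose_apply, this]
    · rw [hy j (by omega)]; ring
  -- descending induction: v = 0
  have hvz : ∀ m : ℕ, ∀ j : Fin n, n ≤ (j : ℕ) + m → v j = 0 := by
    intro m
    induction m with
    | zero => intro j hj; exact absurd hj (by have := j.isLt; omega)
    | succ m ih =>
      intro j hj
      set i : Fin (n + k) := ⟨(j : ℕ) + k, by have := j.isLt; omega⟩ with hidef
      have hui : u i = 0 := hu i (by simp [hidef])
      have hsum : ∑ c : Fin (n + k), R i c * w c
          = R i (Fin.castLE (Nat.le_add_right n k) j) * w (Fin.castLE (Nat.le_add_right n k) j) := by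
        refine Finset.sum_eq_single _ (fun c _ hc => ?_) (fun h => absurd (Finset.mem_univ _) h)
        by_cases hcn : (c : ℕ) < n
        · have hcj : (c : ℕ) ≠ (j : ℕ) := by
            intro h; exact hc (Fin.ext (by simpa using h))
          rcases lt_or_gt_of_ne hcj with hlt | hgt
          · rw [hRhess i c (by simp [hidef]; omega)]; ring
          · have : w c = 0 := by
              simp only [hwdef, dif_pos hcn]
              exact ih ⟨(c : ℕ), hcn⟩ (by simp; omega)
            rw [this]; ring
        · have : w c = 0 := by simp [hwdef, Nat.not_lt.mpr (Nat.le_of_not_lt hcn)]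
          rw [this]; ring
      have hwj : w (Fin.castLE (Nat.le_add_right n k) j) = v j := by
        simp [hwdef, j.isLt]
      have h0 : R i (Fin.castLE (Nat.le_add_right n k) j) * v j = 0 := by
        rw [← hwj, ← hsum]
        have : u i = ∑ c : Fin (n + k), R i c * w c := rfl
        rw [← this, hui]
      have hRne : R i (Fin.castLE (Nat.le_add_right n k) j) ≠ 0 :=
        hRprop i _ (by simp [hidef])
      exact (mul_eq_zero.mp h0).resolve_left hRne
  exact hv (funext fun j => hvz n j (by omega))
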